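/- Let v be a degree-5 vertex of a graph G whose neighborhood is the 5-cycle v₁v₂v₃v₄v₅v₁, with no chords of this cycle present in G. Then f(G,4) = [f(G₁,4) − f(G₁ + {v₁v₄, v₁v₃},4)] + [f(G₂,4) − f(G₂ + {v₃v₁, v₃v₅},4)] + [f(G₃,4) − f(G₃ + {v₁v₄},4)], where G₁ = (G−v)∘{v₂,v₅}, G₂ = (G−v)∘{v₂,v₄}, G₃ = (G−v)∘{v₃,v₅}, '∘' denotes identification of two nonadjacent vertices, and '+' denotes adding edges. -/

import Mathlib

open SimpleGraph

/-- Number of proper `t`-colorings of `G`. -/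
noncomputable def numCol {V : Type*} (G : SimpleGraph V) (t : ℕ) : ℕ :=
  Nat.card {c : V → Fin t // ∀ a b, G.Adj a b → c a ≠ c b}

/-- Identify the vertices `x` and `y` of `G` into the single vertex `x`. -/
def contract {V : Type*} (G : SimpleGraph V) (x y : V) :
    SimpleGraph {w : V // w ≠ y} :=
  SimpleGraph.fromRel (fun a b => G.Adj a.1 b.1 ∨ (a.1 = x ∧ G.Adj y b.1))

/-- Delete the vertex `v` from `G`, then identify `x` and `y` into `x`. -/
def delContract {V : Type*} (G : SimpleGraph V) (v x y : V) :
    SimpleGraph {w : V // w ≠ v ∧ w ≠ y} :=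
  SimpleGraph.fromRel (fun a b => G.Adj a.1 b.1 ∨ (a.1 = x ∧ G.Adj y b.1))

/-- Add the edge `xy` to `G`. -/
def addEdge {V : Type*} (G : SimpleGraph V) (x y : V) : SimpleGraph V :=
  G ⊔ SimpleGraph.fromEdgeSet {s(x, y)}

/-- `H` is a minor of `G`. -/
def IsMinor {W V : Type*} (H : SimpleGraph W) (G : SimpleGraph V) : Prop :=
  ∃ φ : W → Set V,
    (∀ w, (φ w).Nonempty) ∧
    (∀ w, (G.induce (φ w)).Connected) ∧
    (∀ w w', w ≠ w' → Disjoint (φ w) (φ w')) ∧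
    (∀ w w', H.Adj w w' → ∃ a ∈ φ w, ∃ b ∈ φ w', G.Adj a b)

/-- Wagner's characterization of planarity: no `K₅` and no `K₃,₃` minor. -/
def IsPlanar {V : Type*} (G : SimpleGraph V) : Prop :=
  ¬ IsMinor (completeGraph (Fin 5)) G ∧
  ¬ IsMinor (completeBipartiteGraph (Fin 3) (Fin 3)) G

/-! ### Auxiliary machinery -/

section Aux

lemma myCardSplit {α : Type*} [Finite α] (p q : α → Prop) :
    Nat.card {x // p x} = Nat.card {x // p x ∧ q x} + Nat.card {x // p x ∧ ¬ q x} := by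
  classical
  rw [← Nat.card_sum]
  apply Nat.card_congr
  exact
    { toFun := fun x => if h : q x.1 then Sum.inl ⟨x.1, x.2, h⟩ else Sum.inr ⟨x.1, x.2, h⟩
      invFun := Sum.elim (fun x => ⟨x.1, x.2.1⟩) (fun x => ⟨x.1, x.2.1⟩)
      left_inv := by rintro ⟨x, hp⟩; by_cases h : q x <;> simp [h]
      right_inv := by rintro (⟨x, hp, hq⟩ | ⟨x, hp, hq⟩) <;> simp [hq] }

lemma myCardCongr' {α : Type*} (p q : α → Prop) (h : ∀ x, p x ↔ q x) :
    Nat.card {x // p x} = Nat.card {x // q x} :=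
  Nat.card_congr (Equiv.subtypeEquivRight h)

lemma myCardSplit1 {α : Type*} [Finite α] (p q r : α → Prop)
    (hr : ∀ x, p x → (r x ↔ ¬ q x)) :
    Nat.card {x // p x} = Nat.card {x // p x ∧ q x} + Nat.card {x // p x ∧ r x} := by
  have e1 := myCardSplit p q
  have c1 : Nat.card {x // p x ∧ ¬ q x} = Nat.card {x // p x ∧ r x} :=
    myCardCongr' _ _ fun x => ⟨fun h => ⟨h.1, (hr x h.1).mpr h.2⟩,
      fun h => ⟨h.1, (hr x h.1).mp h.2⟩⟩
  omega

lemma myCardSplit2 {α : Type*} [Finite α] (p q1 q2 r : α → Prop)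
    (d12 : ∀ x, p x → q2 x → ¬ q1 x)
    (hr : ∀ x, p x → (r x ↔ (¬ q1 x ∧ ¬ q2 x))) :
    Nat.card {x // p x} =
      Nat.card {x // p x ∧ q1 x} + Nat.card {x // p x ∧ q2 x} + Nat.card {x // p x ∧ r x} := by
  have e1 := myCardSplit p q1
  have e2 := myCardSplit (fun x => p x ∧ ¬ q1 x) q2
  have c2 : Nat.card {x // (p x ∧ ¬ q1 x) ∧ q2 x} = Nat.card {x // p x ∧ q2 x} :=
    myCardCongr' _ _ fun x => ⟨fun h => ⟨h.1.1, h.2⟩, fun h => ⟨⟨h.1, d12 x h.1 h.2⟩, h.2⟩⟩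
  have cr : Nat.card {x // (p x ∧ ¬ q1 x) ∧ ¬ q2 x} = Nat.card {x // p x ∧ r x} :=
    myCardCongr' _ _ fun x => ⟨fun h => ⟨h.1.1, (hr x h.1.1).mpr ⟨h.1.2, h.2⟩⟩,
      fun h => ⟨⟨h.1, ((hr x h.1).mp h.2).1⟩, ((hr x h.1).mp h.2).2⟩⟩
  omega

lemma myCardSplit5 {α : Type*} [Finite α] (p q1 q2 q3 q4 q5 : α → Prop)
    (hcover : ∀ x, p x → ¬ q1 x → ¬ q2 x → ¬ q3 x → ¬ q4 x → q5 x)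
    (d12 : ∀ x, p x → q2 x → ¬ q1 x)
    (d13 : ∀ x, p x → q3 x → ¬ q1 x) (d23 : ∀ x, p x → q3 x → ¬ q2 x)
    (d14 : ∀ x, p x → q4 x → ¬ q1 x) (d24 : ∀ x, p x → q4 x → ¬ q2 x)
    (d34 : ∀ x, p x → q4 x → ¬ q3 x)
    (d15 : ∀ x, p x → q5 x → ¬ q1 x) (d25 : ∀ x, p x → q5 x → ¬ q2 x)
    (d35 : ∀ x, p x → q5 x → ¬ q3 x) (d45 : ∀ x, p x → q5 x → ¬ q4 x) :
    Nat.card {x // p x} =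
      Nat.card {x // p x ∧ q1 x} + Nat.card {x // p x ∧ q2 x} + Nat.card {x // p x ∧ q3 x} +
      Nat.card {x // p x ∧ q4 x} + Nat.card {x // p x ∧ q5 x} := by
  have e1 := myCardSplit p q1
  have e2 := myCardSplit (fun x => p x ∧ ¬ q1 x) q2
  have e3 := myCardSplit (fun x => (p x ∧ ¬ q1 x) ∧ ¬ q2 x) q3
  have e4 := myCardSplit (fun x => ((p x ∧ ¬ q1 x) ∧ ¬ q2 x) ∧ ¬ q3 x) q4
  have c2 : Nat.card {x // (p x ∧ ¬ q1 x) ∧ q2 x} = Nat.card {x // p x ∧ q2 x} :=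
    myCardCongr' _ _ fun x => ⟨fun h => ⟨h.1.1, h.2⟩, fun h => ⟨⟨h.1, d12 x h.1 h.2⟩, h.2⟩⟩
  have c3 : Nat.card {x // ((p x ∧ ¬ q1 x) ∧ ¬ q2 x) ∧ q3 x} = Nat.card {x // p x ∧ q3 x} :=
    myCardCongr' _ _ fun x => ⟨fun h => ⟨h.1.1.1, h.2⟩,
      fun h => ⟨⟨⟨h.1, d13 x h.1 h.2⟩, d23 x h.1 h.2⟩, h.2⟩⟩
  have c4 : Nat.card {x // (((p x ∧ ¬ q1 x) ∧ ¬ q2 x) ∧ ¬ q3 x) ∧ q4 x} =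
      Nat.card {x // p x ∧ q4 x} :=
    myCardCongr' _ _ fun x => ⟨fun h => ⟨h.1.1.1.1, h.2⟩,
      fun h => ⟨⟨⟨⟨h.1, d14 x h.1 h.2⟩, d24 x h.1 h.2⟩, d34 x h.1 h.2⟩, h.2⟩⟩
  have c5 : Nat.card {x // (((p x ∧ ¬ q1 x) ∧ ¬ q2 x) ∧ ¬ q3 x) ∧ ¬ q4 x} =
      Nat.card {x // p x ∧ q5 x} :=
    myCardCongr' _ _ fun x =>
      ⟨fun h => ⟨h.1.1.1.1, hcover x h.1.1.1.1 h.1.1.1.2 h.1.1.2 h.1.2 h.2⟩,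
       fun h => ⟨⟨⟨⟨h.1, d15 x h.1 h.2⟩, d25 x h.1 h.2⟩, d35 x h.1 h.2⟩, d45 x h.1 h.2⟩⟩
  omega

/-- The color missing from three distinct colors in `Fin 4`. -/
def miss (a b d : Fin 4) : Fin 4 := 2 - (a + b + d)

set_option synthInstance.maxSize 5000 in
set_option maxHeartbeats 2000000 in
lemma pat_last : ∀ w a1 a2 a3 a4 a5 : Fin 4,
    a1 ≠ a2 → a2 ≠ a3 → a3 ≠ a4 → a4 ≠ a5 → a5 ≠ a1 →
    w ≠ a1 → w ≠ a2 → w ≠ a3 → w ≠ a4 → w ≠ a5 →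
    ¬(a2 = a5 ∧ a1 = a4) → ¬(a2 = a5 ∧ a1 = a3) →
    ¬(a2 = a4 ∧ a1 = a3) → ¬(a2 = a4 ∧ a3 = a5) → (a3 = a5 ∧ a1 = a4) := by decide

set_option synthInstance.maxSize 5000 in
set_option maxHeartbeats 2000000 in
lemma miss_pat : ∀ w a1 a2 a3 a4 a5 : Fin 4,
    a1 ≠ a2 → a2 ≠ a3 → a3 ≠ a4 → a4 ≠ a5 → a5 ≠ a1 →
    (((a2 = a5 ∧ a1 = a4) ∨ (a2 = a4 ∧ a3 = a5) ∨ (a3 = a5 ∧ a1 = a4)) →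
      ((w ≠ a1 ∧ w ≠ a2 ∧ w ≠ a3 ∧ w ≠ a4 ∧ w ≠ a5) → w = miss a1 a2 a3) ∧
      (w = miss a1 a2 a3 → (w ≠ a1 ∧ w ≠ a2 ∧ w ≠ a3 ∧ w ≠ a4 ∧ w ≠ a5))) ∧
    ((a2 = a5 ∧ a1 = a3) →
      ((w ≠ a1 ∧ w ≠ a2 ∧ w ≠ a3 ∧ w ≠ a4 ∧ w ≠ a5) → w = miss a1 a2 a4) ∧
      (w = miss a1 a2 a4 → (w ≠ a1 ∧ w ≠ a2 ∧ w ≠ a3 ∧ w ≠ a4 ∧ w ≠ a5))) ∧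
    ((a2 = a4 ∧ a1 = a3) →
      ((w ≠ a1 ∧ w ≠ a2 ∧ w ≠ a3 ∧ w ≠ a4 ∧ w ≠ a5) → w = miss a1 a2 a5) ∧
      (w = miss a1 a2 a5 → (w ≠ a1 ∧ w ≠ a2 ∧ w ≠ a3 ∧ w ≠ a4 ∧ w ≠ a5))) := by decide

set_option synthInstance.maxSize 5000 in
set_option maxHeartbeats 2000000 in
lemma pat_disj : ∀ a1 a2 a3 a4 a5 : Fin 4,
    a1 ≠ a2 → a2 ≠ a3 → a3 ≠ a4 → a4 ≠ a5 → a5 ≠ a1 →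
    ((a2 = a5 ∧ a1 = a3) → ¬(a1 = a4)) ∧
    ((a2 = a4 ∧ a1 = a3) → ¬(a2 = a5)) ∧
    ((a2 = a4 ∧ a3 = a5) → ¬(a2 = a5) ∧ ¬(a1 = a3)) ∧
    ((a3 = a5 ∧ a1 = a4) → ¬(a2 = a5) ∧ ¬(a2 = a4)) ∧
    ((a2 = a5 ∧ a1 = a4) → ¬(a1 = a3)) ∧
    ((a2 = a4 ∧ a1 = a3) → ¬(a3 = a5)) := by decide

/-- Proper-coloring condition for the graph with `v` deleted. -/
def prDel {V : Type*} (G : SimpleGraph V) (v : V) (c : V → Fin 4) : Prop :=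
  ∀ a b, a ≠ v → b ≠ v → G.Adj a b → c a ≠ c b

lemma card_pin {V : Type*} [Fintype V] [DecidableEq V] (v : V)
    (p q : (V → Fin 4) → Prop) (m : (V → Fin 4) → Fin 4)
    (hp : ∀ c w, p c → p (Function.update c v w))
    (hm : ∀ c w, m (Function.update c v w) = m c)
    (hq : ∀ c, p c → (q c ↔ c v = m c)) :
    Nat.card {c : V → Fin 4 // p c ∧ q c} = Nat.card {c : V → Fin 4 // p c ∧ c v = 0} := by
  apply Nat.card_congr
  refine
    { toFun := fun c => ⟨Function.update c.1 v 0, hp _ _ c.2.1, Function.update_self _ _ _⟩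
      invFun := fun c => ⟨Function.update c.1 v (m c.1), hp _ _ c.2.1, ?_⟩
      left_inv := ?_
      right_inv := ?_ }
  · exact (hq _ (hp _ _ c.2.1)).mpr (by rw [Function.update_self, hm])
  · rintro ⟨c, hpc, hqc⟩
    have hcv : c v = m c := (hq c hpc).mp hqc
    apply Subtype.ext
    show Function.update (Function.update c v 0) v (m (Function.update c v 0)) = c
    rw [hm, Function.update_idem, ← hcv, Function.update_eq_self]
  · rintro ⟨c, hpc, h0⟩
    apply Subtype.ext
    show Function.update (Function.update c v (m c)) v 0 = c
    rw [Function.update_idem, ← h0, Function.update_eq_self]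

/-- Extension of a coloring of the contracted graph back to `V`. -/
def extC {V : Type*} [DecidableEq V] (v x y : V) (hxv : x ≠ v) (hxy : x ≠ y)
    (d : {w : V // w ≠ v ∧ w ≠ y} → Fin 4) : V → Fin 4 :=
  fun w => if h1 : w = v then 0 else if h2 : w = y then d ⟨x, hxv, hxy⟩ else d ⟨w, h1, h2⟩

lemma extC_v {V : Type*} [DecidableEq V] (v x y : V) (hxv : x ≠ v) (hxy : x ≠ y)
    (d : {w : V // w ≠ v ∧ w ≠ y} → Fin 4) : extC v x y hxv hxy d v = 0 := by
  simp [extC]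

lemma extC_y {V : Type*} [DecidableEq V] (v x y : V) (hxv : x ≠ v) (hxy : x ≠ y)
    (hyv : y ≠ v) (d : {w : V // w ≠ v ∧ w ≠ y} → Fin 4) :
    extC v x y hxv hxy d y = d ⟨x, hxv, hxy⟩ := by
  simp [extC, hyv]

lemma extC_ne {V : Type*} [DecidableEq V] (v x y : V) (hxv : x ≠ v) (hxy : x ≠ y)
    (d : {w : V // w ≠ v ∧ w ≠ y} → Fin 4) (w : V) (h1 : w ≠ v) (h2 : w ≠ y) :
    extC v x y hxv hxy d w = d ⟨w, h1, h2⟩ := by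
  simp [extC, h1, h2]

lemma card_dc {V : Type*} [Fintype V] [DecidableEq V] (G : SimpleGraph V) (v x y : V)
    (hxv : x ≠ v) (hyv : y ≠ v) (hxy : x ≠ y) (hna : ¬ G.Adj x y)
    (Q : (V → Fin 4) → Prop) (R : ({w : V // w ≠ v ∧ w ≠ y} → Fin 4) → Prop)
    (hQR : ∀ c : V → Fin 4, Q c ↔ R (fun w => c w.1)) :
    Nat.card {d : {w : V // w ≠ v ∧ w ≠ y} → Fin 4 //
        (∀ a b, (delContract G v x y).Adj a b → d a ≠ d b) ∧ R d} =
    Nat.card {c : V → Fin 4 // prDel G v c ∧ c v = 0 ∧ c x = c y ∧ Q c} := by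
  have hres : ∀ d : {w : V // w ≠ v ∧ w ≠ y} → Fin 4,
      (fun w : {w : V // w ≠ v ∧ w ≠ y} => extC v x y hxv hxy d w.1) = d := by
    intro d
    funext w
    rw [extC_ne v x y hxv hxy d w.1 w.2.1 w.2.2]
  apply Nat.card_congr
  refine
    { toFun := fun d => ⟨extC v x y hxv hxy d.1, ?_, extC_v v x y hxv hxy d.1, ?_, ?_⟩
      invFun := fun c => ⟨fun w => c.1 w.1, ?_, (hQR c.1).mp c.2.2.2.2⟩
      left_inv := ?_
      right_inv := ?_ }
  · -- prDel for the extension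
    intro a b ha hb hab
    by_cases hay : a = y
    · rw [hay] at hab ⊢
      by_cases hby : b = y
      · rw [hby] at hab; exact absurd hab (G.loopless.irrefl _)
      · rw [extC_y v x y hxv hxy hyv d.1, extC_ne v x y hxv hxy d.1 b hb hby]
        have hxb : x ≠ b := fun h => hna (h ▸ hab).symm
        refine d.2.1 ⟨x, hxv, hxy⟩ ⟨b, hb, hby⟩ ?_
        simp only [delContract, SimpleGraph.fromRel_adj]
        exact ⟨fun h => hxb (congrArg Subtype.val h), Or.inl (Or.inr ⟨by trivial, hab⟩)⟩
    · by_cases hby : b = y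
      · rw [hby] at hab ⊢
        rw [extC_ne v x y hxv hxy d.1 a ha hay, extC_y v x y hxv hxy hyv d.1]
        have hxa : x ≠ a := fun h => hna (h ▸ hab)
        refine (d.2.1 ⟨x, hxv, hxy⟩ ⟨a, ha, hay⟩ ?_).symm
        simp only [delContract, SimpleGraph.fromRel_adj]
        exact ⟨fun h => hxa (congrArg Subtype.val h), Or.inl (Or.inr ⟨by trivial, hab.symm⟩)⟩
      · rw [extC_ne v x y hxv hxy d.1 a ha hay, extC_ne v x y hxv hxy d.1 b hb hby]
        refine d.2.1 ⟨a, ha, hay⟩ ⟨b, hb, hby⟩ ?_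
        simp only [delContract, SimpleGraph.fromRel_adj]
        exact ⟨fun h => hab.ne (congrArg Subtype.val h), Or.inl (Or.inl hab)⟩
  · -- extension sends x and y to the same color
    rw [extC_ne v x y hxv hxy d.1 x hxv hxy, extC_y v x y hxv hxy hyv d.1]
  · -- Q holds for the extension
    rw [hQR, hres d.1]
    exact d.2.2
  · -- restriction is a proper coloring of the contraction
    intro a b hab
    simp only [delContract, SimpleGraph.fromRel_adj] at hab
    obtain ⟨hne, h⟩ := hab
    rcases h with (h | ⟨hax, hyb⟩) | (h | ⟨hbx, hya⟩)
    · exact c.2.1 a.1 b.1 a.2.1 b.2.1 h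
    · show c.1 a.1 ≠ c.1 b.1
      rw [hax, c.2.2.2.1]
      exact c.2.1 y b.1 hyv b.2.1 hyb
    · exact (c.2.1 b.1 a.1 b.2.1 a.2.1 h).symm
    · show c.1 a.1 ≠ c.1 b.1
      rw [hbx, c.2.2.2.1]
      exact (c.2.1 y a.1 hyv a.2.1 hya).symm
  · -- left inverse
    rintro ⟨d, hd⟩
    apply Subtype.ext
    exact hres d
  · -- right inverse
    rintro ⟨c, hpc, h0, hxyc, hQc⟩
    apply Subtype.ext
    funext w
    show extC v x y hxv hxy (fun u => c u.1) w = c w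
    by_cases h1 : w = v
    · rw [h1, extC_v v x y hxv hxy]
      exact h0.symm
    · by_cases h2 : w = y
      · rw [h2, extC_y v x y hxv hxy hyv]
        exact hxyc
      · rw [extC_ne v x y hxv hxy _ w h1 h2]

lemma addEdge_proper {α : Type*} (H : SimpleGraph α) (x y : α) (hxy : x ≠ y)
    (d : α → Fin 4) :
    (∀ a b, (addEdge H x y).Adj a b → d a ≠ d b) ↔
      ((∀ a b, H.Adj a b → d a ≠ d b) ∧ d x ≠ d y) := by
  constructor
  · intro h
    refine ⟨fun a b hab => h a b ?_, h x y ?_⟩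
    · simp only [addEdge, SimpleGraph.sup_adj]
      exact Or.inl hab
    · simp [addEdge, hxy]
  · rintro ⟨h, hxyne⟩ a b hab
    simp only [addEdge, SimpleGraph.sup_adj, SimpleGraph.fromEdgeSet_adj,
      Set.mem_singleton_iff, Sym2.eq_iff] at hab
    rcases hab with hab | ⟨(⟨rfl, rfl⟩ | ⟨rfl, rfl⟩), hne⟩
    · exact h a b hab
    · exact hxyne
    · exact hxyne.symm

end Aux

set_option maxHeartbeats 4000000 in
theorem stmt12 {V : Type*} [Fintype V] (G : SimpleGraph V) (v v₁ v₂ v₃ v₄ v₅ : V)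
    (hN : G.neighborSet v = {v₁, v₂, v₃, v₄, v₅})
    (hv1 : G.Adj v v₁) (hv2 : G.Adj v v₂) (hv3 : G.Adj v v₃)
    (hv4 : G.Adj v v₄) (hv5 : G.Adj v v₅)
    (h12 : v₁ ≠ v₂) (h13 : v₁ ≠ v₃) (h14 : v₁ ≠ v₄) (h15 : v₁ ≠ v₅)
    (h23 : v₂ ≠ v₃) (h24 : v₂ ≠ v₄) (h25 : v₂ ≠ v₅)
    (h34 : v₃ ≠ v₄) (h35 : v₃ ≠ v₅) (h45 : v₄ ≠ v₅)
    (e12 : G.Adj v₁ v₂) (e23 : G.Adj v₂ v₃) (e34 : G.Adj v₃ v₄)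
    (e45 : G.Adj v₄ v₅) (e51 : G.Adj v₅ v₁)
    (n13 : ¬ G.Adj v₁ v₃) (n14 : ¬ G.Adj v₁ v₄) (n24 : ¬ G.Adj v₂ v₄)
    (n25 : ¬ G.Adj v₂ v₅) (n35 : ¬ G.Adj v₃ v₅) :
    (numCol G 4 : ℤ) =
      ((numCol (delContract G v v₂ v₅) 4 : ℤ) -
        (numCol (addEdge (addEdge (delContract G v v₂ v₅) ⟨v₁, hv1.ne', h15⟩ ⟨v₄, hv4.ne', h45⟩)
          ⟨v₁, hv1.ne', h15⟩ ⟨v₃, hv3.ne', h35⟩) 4 : ℤ)) +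
      ((numCol (delContract G v v₂ v₄) 4 : ℤ) -
        (numCol (addEdge (addEdge (delContract G v v₂ v₄) ⟨v₃, hv3.ne', h34⟩ ⟨v₁, hv1.ne', h14⟩)
          ⟨v₃, hv3.ne', h34⟩ ⟨v₅, hv5.ne', h45.symm⟩) 4 : ℤ)) +
      ((numCol (delContract G v v₃ v₅) 4 : ℤ) -
        (numCol (addEdge (delContract G v v₃ v₅) ⟨v₁, hv1.ne', h15⟩ ⟨v₄, hv4.ne', h45⟩) 4 : ℤ)) := by
  classical
  have nv1 : v₁ ≠ v := hv1.ne'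
  have nv2 : v₂ ≠ v := hv2.ne'
  have nv3 : v₃ ≠ v := hv3.ne'
  have nv4 : v₄ ≠ v := hv4.ne'
  have nv5 : v₅ ≠ v := hv5.ne'
  -- cycle inequalities for any coloring satisfying `prDel`
  have nc : ∀ c : V → Fin 4, prDel G v c →
      (c v₁ ≠ c v₂ ∧ c v₂ ≠ c v₃ ∧ c v₃ ≠ c v₄ ∧ c v₄ ≠ c v₅ ∧ c v₅ ≠ c v₁) :=
    fun c hc => ⟨hc _ _ nv1 nv2 e12, hc _ _ nv2 nv3 e23, hc _ _ nv3 nv4 e34,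
      hc _ _ nv4 nv5 e45, hc _ _ nv5 nv1 e51⟩
  -- helper for Function.update
  have hupd : ∀ (c : V → Fin 4) (w : Fin 4) (u : V), u ≠ v → Function.update c v w u = c u :=
    fun c w u hu => Function.update_of_ne hu w c
  have hprupd : ∀ (c : V → Fin 4) (w : Fin 4), prDel G v c → prDel G v (Function.update c v w) := by
    intro c w hc a b ha hb hab
    rw [hupd c w a ha, hupd c w b hb]
    exact hc a b ha hb hab
  -- Step L0
  have L0 : numCol G 4 = Nat.card {c : V → Fin 4 // prDel G v c ∧
      (c v ≠ c v₁ ∧ c v ≠ c v₂ ∧ c v ≠ c v₃ ∧ c v ≠ c v₄ ∧ c v ≠ c v₅)} := by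
    unfold numCol
    apply myCardCongr'
    intro c
    constructor
    · intro h
      exact ⟨fun a b _ _ hab => h a b hab, h v v₁ hv1, h v v₂ hv2, h v v₃ hv3,
        h v v₄ hv4, h v v₅ hv5⟩
    · rintro ⟨hp, h1, h2, h3, h4, h5⟩ a b hab
      by_cases ha : a = v
      · subst ha
        have hmem : b ∈ G.neighborSet a := hab
        rw [hN] at hmem
        simp only [Set.mem_insert_iff, Set.mem_singleton_iff] at hmem
        rcases hmem with rfl | rfl | rfl | rfl | rfl
        exacts [h1, h2, h3, h4, h5]
      · by_cases hb : b = v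
        · subst hb
          have hmem : a ∈ G.neighborSet b := hab.symm
          rw [hN] at hmem
          simp only [Set.mem_insert_iff, Set.mem_singleton_iff] at hmem
          rcases hmem with rfl | rfl | rfl | rfl | rfl
          exacts [h1.symm, h2.symm, h3.symm, h4.symm, h5.symm]
        · exact hp a b ha hb hab
  -- the five pattern counts, with the vertex `v` pinned to color 0
  -- a1 : c v₂ = c v₅ ∧ c v₁ = c v₄
  -- a2 : c v₂ = c v₅ ∧ c v₁ = c v₃
  -- a3 : c v₂ = c v₄ ∧ c v₁ = c v₃
  -- a4 : c v₂ = c v₄ ∧ c v₃ = c v₅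
  -- a5 : c v₃ = c v₅ ∧ c v₁ = c v₄
  -- pin lemmas
  have pin1 : Nat.card {c : V → Fin 4 // (prDel G v c ∧ (c v₂ = c v₅ ∧ c v₁ = c v₄)) ∧
      (c v ≠ c v₁ ∧ c v ≠ c v₂ ∧ c v ≠ c v₃ ∧ c v ≠ c v₄ ∧ c v ≠ c v₅)} =
      Nat.card {c : V → Fin 4 // (prDel G v c ∧ (c v₂ = c v₅ ∧ c v₁ = c v₄)) ∧ c v = 0} := by
    apply card_pin v _ _ (fun c => miss (c v₁) (c v₂) (c v₃))
    · rintro c w ⟨hc, hp1, hp2⟩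
      refine ⟨hprupd c w hc, ?_, ?_⟩
      · rw [hupd c w v₂ nv2, hupd c w v₅ nv5]; exact hp1
      · rw [hupd c w v₁ nv1, hupd c w v₄ nv4]; exact hp2
    · intro c w
      rw [hupd c w v₁ nv1, hupd c w v₂ nv2, hupd c w v₃ nv3]
    · rintro c ⟨hc, hpat⟩
      obtain ⟨m12, m23, m34, m45, m51⟩ := nc c hc
      have H := miss_pat (c v) (c v₁) (c v₂) (c v₃) (c v₄) (c v₅) m12 m23 m34 m45 m51
      exact ⟨(H.1 (Or.inl hpat)).1, (H.1 (Or.inl hpat)).2⟩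
  have pin2 : Nat.card {c : V → Fin 4 // (prDel G v c ∧ (c v₂ = c v₅ ∧ c v₁ = c v₃)) ∧
      (c v ≠ c v₁ ∧ c v ≠ c v₂ ∧ c v ≠ c v₃ ∧ c v ≠ c v₄ ∧ c v ≠ c v₅)} =
      Nat.card {c : V → Fin 4 // (prDel G v c ∧ (c v₂ = c v₅ ∧ c v₁ = c v₃)) ∧ c v = 0} := by
    apply card_pin v _ _ (fun c => miss (c v₁) (c v₂) (c v₄))
    · rintro c w ⟨hc, hp1, hp2⟩
      refine ⟨hprupd c w hc, ?_, ?_⟩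
      · rw [hupd c w v₂ nv2, hupd c w v₅ nv5]; exact hp1
      · rw [hupd c w v₁ nv1, hupd c w v₃ nv3]; exact hp2
    · intro c w
      rw [hupd c w v₁ nv1, hupd c w v₂ nv2, hupd c w v₄ nv4]
    · rintro c ⟨hc, hpat⟩
      obtain ⟨m12, m23, m34, m45, m51⟩ := nc c hc
      have H := miss_pat (c v) (c v₁) (c v₂) (c v₃) (c v₄) (c v₅) m12 m23 m34 m45 m51
      exact ⟨(H.2.1 hpat).1, (H.2.1 hpat).2⟩
  have pin3 : Nat.card {c : V → Fin 4 // (prDel G v c ∧ (c v₂ = c v₄ ∧ c v₁ = c v₃)) ∧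
      (c v ≠ c v₁ ∧ c v ≠ c v₂ ∧ c v ≠ c v₃ ∧ c v ≠ c v₄ ∧ c v ≠ c v₅)} =
      Nat.card {c : V → Fin 4 // (prDel G v c ∧ (c v₂ = c v₄ ∧ c v₁ = c v₃)) ∧ c v = 0} := by
    apply card_pin v _ _ (fun c => miss (c v₁) (c v₂) (c v₅))
    · rintro c w ⟨hc, hp1, hp2⟩
      refine ⟨hprupd c w hc, ?_, ?_⟩
      · rw [hupd c w v₂ nv2, hupd c w v₄ nv4]; exact hp1
      · rw [hupd c w v₁ nv1, hupd c w v₃ nv3]; exact hp2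
    · intro c w
      rw [hupd c w v₁ nv1, hupd c w v₂ nv2, hupd c w v₅ nv5]
    · rintro c ⟨hc, hpat⟩
      obtain ⟨m12, m23, m34, m45, m51⟩ := nc c hc
      have H := miss_pat (c v) (c v₁) (c v₂) (c v₃) (c v₄) (c v₅) m12 m23 m34 m45 m51
      exact ⟨(H.2.2 hpat).1, (H.2.2 hpat).2⟩
  have pin4 : Nat.card {c : V → Fin 4 // (prDel G v c ∧ (c v₂ = c v₄ ∧ c v₃ = c v₅)) ∧
      (c v ≠ c v₁ ∧ c v ≠ c v₂ ∧ c v ≠ c v₃ ∧ c v ≠ c v₄ ∧ c v ≠ c v₅)} =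
      Nat.card {c : V → Fin 4 // (prDel G v c ∧ (c v₂ = c v₄ ∧ c v₃ = c v₅)) ∧ c v = 0} := by
    apply card_pin v _ _ (fun c => miss (c v₁) (c v₂) (c v₃))
    · rintro c w ⟨hc, hp1, hp2⟩
      refine ⟨hprupd c w hc, ?_, ?_⟩
      · rw [hupd c w v₂ nv2, hupd c w v₄ nv4]; exact hp1
      · rw [hupd c w v₃ nv3, hupd c w v₅ nv5]; exact hp2
    · intro c w
      rw [hupd c w v₁ nv1, hupd c w v₂ nv2, hupd c w v₃ nv3]
    · rintro c ⟨hc, hpat⟩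
      obtain ⟨m12, m23, m34, m45, m51⟩ := nc c hc
      have H := miss_pat (c v) (c v₁) (c v₂) (c v₃) (c v₄) (c v₅) m12 m23 m34 m45 m51
      exact ⟨(H.1 (Or.inr (Or.inl hpat))).1, (H.1 (Or.inr (Or.inl hpat))).2⟩
  have pin5 : Nat.card {c : V → Fin 4 // (prDel G v c ∧ (c v₃ = c v₅ ∧ c v₁ = c v₄)) ∧
      (c v ≠ c v₁ ∧ c v ≠ c v₂ ∧ c v ≠ c v₃ ∧ c v ≠ c v₄ ∧ c v ≠ c v₅)} =
      Nat.card {c : V → Fin 4 // (prDel G v c ∧ (c v₃ = c v₅ ∧ c v₁ = c v₄)) ∧ c v = 0} := by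
    apply card_pin v _ _ (fun c => miss (c v₁) (c v₂) (c v₃))
    · rintro c w ⟨hc, hp1, hp2⟩
      refine ⟨hprupd c w hc, ?_, ?_⟩
      · rw [hupd c w v₃ nv3, hupd c w v₅ nv5]; exact hp1
      · rw [hupd c w v₁ nv1, hupd c w v₄ nv4]; exact hp2
    · intro c w
      rw [hupd c w v₁ nv1, hupd c w v₂ nv2, hupd c w v₃ nv3]
    · rintro c ⟨hc, hpat⟩
      obtain ⟨m12, m23, m34, m45, m51⟩ := nc c hc
      have H := miss_pat (c v) (c v₁) (c v₂) (c v₃) (c v₄) (c v₅) m12 m23 m34 m45 m51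
      exact ⟨(H.1 (Or.inr (Or.inr hpat))).1, (H.1 (Or.inr (Or.inr hpat))).2⟩
  -- Step E0: decompose numCol G 4 into the five pattern counts
  have E0 : numCol G 4 =
      Nat.card {c : V → Fin 4 // (prDel G v c ∧ (c v₂ = c v₅ ∧ c v₁ = c v₄)) ∧ c v = 0} +
      Nat.card {c : V → Fin 4 // (prDel G v c ∧ (c v₂ = c v₅ ∧ c v₁ = c v₃)) ∧ c v = 0} +
      Nat.card {c : V → Fin 4 // (prDel G v c ∧ (c v₂ = c v₄ ∧ c v₁ = c v₃)) ∧ c v = 0} +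
      Nat.card {c : V → Fin 4 // (prDel G v c ∧ (c v₂ = c v₄ ∧ c v₃ = c v₅)) ∧ c v = 0} +
      Nat.card {c : V → Fin 4 // (prDel G v c ∧ (c v₃ = c v₅ ∧ c v₁ = c v₄)) ∧ c v = 0} := by
    rw [L0]
    rw [myCardSplit5
      (fun c : V → Fin 4 => prDel G v c ∧
        (c v ≠ c v₁ ∧ c v ≠ c v₂ ∧ c v ≠ c v₃ ∧ c v ≠ c v₄ ∧ c v ≠ c v₅))
      (fun c => c v₂ = c v₅ ∧ c v₁ = c v₄)
      (fun c => c v₂ = c v₅ ∧ c v₁ = c v₃)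
      (fun c => c v₂ = c v₄ ∧ c v₁ = c v₃)
      (fun c => c v₂ = c v₄ ∧ c v₃ = c v₅)
      (fun c => c v₃ = c v₅ ∧ c v₁ = c v₄)
      ?_ ?_ ?_ ?_ ?_ ?_ ?_ ?_ ?_ ?_ ?_]
    · have r1 : Nat.card {c : V → Fin 4 // (prDel G v c ∧
          (c v ≠ c v₁ ∧ c v ≠ c v₂ ∧ c v ≠ c v₃ ∧ c v ≠ c v₄ ∧ c v ≠ c v₅)) ∧
          (c v₂ = c v₅ ∧ c v₁ = c v₄)} =
          Nat.card {c : V → Fin 4 // (prDel G v c ∧ (c v₂ = c v₅ ∧ c v₁ = c v₄)) ∧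
          (c v ≠ c v₁ ∧ c v ≠ c v₂ ∧ c v ≠ c v₃ ∧ c v ≠ c v₄ ∧ c v ≠ c v₅)} :=
        myCardCongr' _ _ fun c => by tauto
      have r2 : Nat.card {c : V → Fin 4 // (prDel G v c ∧
          (c v ≠ c v₁ ∧ c v ≠ c v₂ ∧ c v ≠ c v₃ ∧ c v ≠ c v₄ ∧ c v ≠ c v₅)) ∧
          (c v₂ = c v₅ ∧ c v₁ = c v₃)} =
          Nat.card {c : V → Fin 4 // (prDel G v c ∧ (c v₂ = c v₅ ∧ c v₁ = c v₃)) ∧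
          (c v ≠ c v₁ ∧ c v ≠ c v₂ ∧ c v ≠ c v₃ ∧ c v ≠ c v₄ ∧ c v ≠ c v₅)} :=
        myCardCongr' _ _ fun c => by tauto
      have r3 : Nat.card {c : V → Fin 4 // (prDel G v c ∧
          (c v ≠ c v₁ ∧ c v ≠ c v₂ ∧ c v ≠ c v₃ ∧ c v ≠ c v₄ ∧ c v ≠ c v₅)) ∧
          (c v₂ = c v₄ ∧ c v₁ = c v₃)} =
          Nat.card {c : V → Fin 4 // (prDel G v c ∧ (c v₂ = c v₄ ∧ c v₁ = c v₃)) ∧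
          (c v ≠ c v₁ ∧ c v ≠ c v₂ ∧ c v ≠ c v₃ ∧ c v ≠ c v₄ ∧ c v ≠ c v₅)} :=
        myCardCongr' _ _ fun c => by tauto
      have r4 : Nat.card {c : V → Fin 4 // (prDel G v c ∧
          (c v ≠ c v₁ ∧ c v ≠ c v₂ ∧ c v ≠ c v₃ ∧ c v ≠ c v₄ ∧ c v ≠ c v₅)) ∧
          (c v₂ = c v₄ ∧ c v₃ = c v₅)} =
          Nat.card {c : V → Fin 4 // (prDel G v c ∧ (c v₂ = c v₄ ∧ c v₃ = c v₅)) ∧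
          (c v ≠ c v₁ ∧ c v ≠ c v₂ ∧ c v ≠ c v₃ ∧ c v ≠ c v₄ ∧ c v ≠ c v₅)} :=
        myCardCongr' _ _ fun c => by tauto
      have r5 : Nat.card {c : V → Fin 4 // (prDel G v c ∧
          (c v ≠ c v₁ ∧ c v ≠ c v₂ ∧ c v ≠ c v₃ ∧ c v ≠ c v₄ ∧ c v ≠ c v₅)) ∧
          (c v₃ = c v₅ ∧ c v₁ = c v₄)} =
          Nat.card {c : V → Fin 4 // (prDel G v c ∧ (c v₃ = c v₅ ∧ c v₁ = c v₄)) ∧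
          (c v ≠ c v₁ ∧ c v ≠ c v₂ ∧ c v ≠ c v₃ ∧ c v ≠ c v₄ ∧ c v ≠ c v₅)} :=
        myCardCongr' _ _ fun c => by tauto
      rw [r1, r2, r3, r4, r5, pin1, pin2, pin3, pin4, pin5]
    · -- cover
      rintro c ⟨hc, hm1, hm2, hm3, hm4, hm5⟩ k1 k2 k3 k4
      obtain ⟨m12, m23, m34, m45, m51⟩ := nc c hc
      exact pat_last (c v) (c v₁) (c v₂) (c v₃) (c v₄) (c v₅)
        m12 m23 m34 m45 m51 hm1 hm2 hm3 hm4 hm5 k1 k2 k3 k4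
    · rintro c ⟨hc, -⟩ hq hq1
      obtain ⟨m12, m23, m34, m45, m51⟩ := nc c hc
      exact (pat_disj (c v₁) (c v₂) (c v₃) (c v₄) (c v₅) m12 m23 m34 m45 m51).1 hq hq1.2
    · rintro c ⟨hc, -⟩ hq hq1
      obtain ⟨m12, m23, m34, m45, m51⟩ := nc c hc
      exact (pat_disj (c v₁) (c v₂) (c v₃) (c v₄) (c v₅) m12 m23 m34 m45 m51).2.1 hq hq1.1
    · rintro c ⟨hc, -⟩ hq hq1
      obtain ⟨m12, m23, m34, m45, m51⟩ := nc c hc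
      exact (pat_disj (c v₁) (c v₂) (c v₃) (c v₄) (c v₅) m12 m23 m34 m45 m51).2.1 hq hq1.1
    · rintro c ⟨hc, -⟩ hq hq1
      obtain ⟨m12, m23, m34, m45, m51⟩ := nc c hc
      exact ((pat_disj (c v₁) (c v₂) (c v₃) (c v₄) (c v₅) m12 m23 m34 m45 m51).2.2.1 hq).1 hq1.1
    · rintro c ⟨hc, -⟩ hq hq1
      obtain ⟨m12, m23, m34, m45, m51⟩ := nc c hc
      exact ((pat_disj (c v₁) (c v₂) (c v₃) (c v₄) (c v₅) m12 m23 m34 m45 m51).2.2.1 hq).1 hq1.1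
    · rintro c ⟨hc, -⟩ hq hq1
      obtain ⟨m12, m23, m34, m45, m51⟩ := nc c hc
      exact ((pat_disj (c v₁) (c v₂) (c v₃) (c v₄) (c v₅) m12 m23 m34 m45 m51).2.2.1 hq).2 hq1.2
    · rintro c ⟨hc, -⟩ hq hq1
      obtain ⟨m12, m23, m34, m45, m51⟩ := nc c hc
      exact ((pat_disj (c v₁) (c v₂) (c v₃) (c v₄) (c v₅) m12 m23 m34 m45 m51).2.2.2.1 hq).1 hq1.1
    · rintro c ⟨hc, -⟩ hq hq1
      obtain ⟨m12, m23, m34, m45, m51⟩ := nc c hc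
      exact ((pat_disj (c v₁) (c v₂) (c v₃) (c v₄) (c v₅) m12 m23 m34 m45 m51).2.2.2.1 hq).1 hq1.1
    · rintro c ⟨hc, -⟩ hq hq1
      obtain ⟨m12, m23, m34, m45, m51⟩ := nc c hc
      exact ((pat_disj (c v₁) (c v₂) (c v₃) (c v₄) (c v₅) m12 m23 m34 m45 m51).2.2.2.1 hq).2 hq1.1
    · rintro c ⟨hc, -⟩ hq hq1
      obtain ⟨m12, m23, m34, m45, m51⟩ := nc c hc
      exact ((pat_disj (c v₁) (c v₂) (c v₃) (c v₄) (c v₅) m12 m23 m34 m45 m51).2.2.2.1 hq).2 hq1.1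
  -- subtype vertex inequalities
  have hne14 : (⟨v₁, hv1.ne', h15⟩ : {w : V // w ≠ v ∧ w ≠ v₅}) ≠ ⟨v₄, hv4.ne', h45⟩ :=
    fun h => h14 (congrArg Subtype.val h)
  have hne13 : (⟨v₁, hv1.ne', h15⟩ : {w : V // w ≠ v ∧ w ≠ v₅}) ≠ ⟨v₃, hv3.ne', h35⟩ :=
    fun h => h13 (congrArg Subtype.val h)
  have hne31 : (⟨v₃, hv3.ne', h34⟩ : {w : V // w ≠ v ∧ w ≠ v₄}) ≠ ⟨v₁, hv1.ne', h14⟩ :=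
    fun h => h13 (congrArg Subtype.val h).symm
  have hne35 : (⟨v₃, hv3.ne', h34⟩ : {w : V // w ≠ v ∧ w ≠ v₄}) ≠ ⟨v₅, hv5.ne', h45.symm⟩ :=
    fun h => h35 (congrArg Subtype.val h)
  -- ===== Term 1 =====
  have R1 : numCol (delContract G v v₂ v₅) 4 =
      Nat.card {c : V → Fin 4 // prDel G v c ∧ c v = 0 ∧ c v₂ = c v₅ ∧ True} := by
    unfold numCol
    refine Eq.trans ?_ (card_dc G v v₂ v₅ hv2.ne' hv5.ne' h25 n25
      (fun _ => True) (fun _ => True) (fun _ => Iff.rfl))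
    exact myCardCongr' _ _ fun d => (and_iff_left trivial).symm
  have R1' : numCol (addEdge (addEdge (delContract G v v₂ v₅) ⟨v₁, hv1.ne', h15⟩
        ⟨v₄, hv4.ne', h45⟩) ⟨v₁, hv1.ne', h15⟩ ⟨v₃, hv3.ne', h35⟩) 4 =
      Nat.card {c : V → Fin 4 // prDel G v c ∧ c v = 0 ∧ c v₂ = c v₅ ∧
        (c v₁ ≠ c v₄ ∧ c v₁ ≠ c v₃)} := by
    unfold numCol
    refine Eq.trans ?_ (card_dc G v v₂ v₅ hv2.ne' hv5.ne' h25 n25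
      (fun c => c v₁ ≠ c v₄ ∧ c v₁ ≠ c v₃)
      (fun d => d ⟨v₁, hv1.ne', h15⟩ ≠ d ⟨v₄, hv4.ne', h45⟩ ∧
        d ⟨v₁, hv1.ne', h15⟩ ≠ d ⟨v₃, hv3.ne', h35⟩)
      (fun c => Iff.rfl))
    apply myCardCongr'
    intro d
    rw [addEdge_proper _ _ _ hne13 d, addEdge_proper _ _ _ hne14 d, and_assoc]
  have E1 : numCol (delContract G v v₂ v₅) 4 =
      Nat.card {c : V → Fin 4 // (prDel G v c ∧ (c v₂ = c v₅ ∧ c v₁ = c v₄)) ∧ c v = 0} +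
      Nat.card {c : V → Fin 4 // (prDel G v c ∧ (c v₂ = c v₅ ∧ c v₁ = c v₃)) ∧ c v = 0} +
      Nat.card {c : V → Fin 4 // prDel G v c ∧ c v = 0 ∧ c v₂ = c v₅ ∧
        (c v₁ ≠ c v₄ ∧ c v₁ ≠ c v₃)} := by
    rw [R1]
    rw [myCardSplit2 (fun c : V → Fin 4 => prDel G v c ∧ c v = 0 ∧ c v₂ = c v₅ ∧ True)
      (fun c => c v₁ = c v₄) (fun c => c v₁ = c v₃)
      (fun c => c v₁ ≠ c v₄ ∧ c v₁ ≠ c v₃)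
      ?_ (fun c _ => Iff.rfl)]
    · have p1 : Nat.card {c : V → Fin 4 //
          (prDel G v c ∧ c v = 0 ∧ c v₂ = c v₅ ∧ True) ∧ c v₁ = c v₄} =
          Nat.card {c : V → Fin 4 // (prDel G v c ∧ (c v₂ = c v₅ ∧ c v₁ = c v₄)) ∧ c v = 0} :=
        myCardCongr' _ _ fun c => by tauto
      have p2 : Nat.card {c : V → Fin 4 //
          (prDel G v c ∧ c v = 0 ∧ c v₂ = c v₅ ∧ True) ∧ c v₁ = c v₃} =
          Nat.card {c : V → Fin 4 // (prDel G v c ∧ (c v₂ = c v₅ ∧ c v₁ = c v₃)) ∧ c v = 0} :=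
        myCardCongr' _ _ fun c => by tauto
      have p3 : Nat.card {c : V → Fin 4 //
          (prDel G v c ∧ c v = 0 ∧ c v₂ = c v₅ ∧ True) ∧ (c v₁ ≠ c v₄ ∧ c v₁ ≠ c v₃)} =
          Nat.card {c : V → Fin 4 // prDel G v c ∧ c v = 0 ∧ c v₂ = c v₅ ∧
            (c v₁ ≠ c v₄ ∧ c v₁ ≠ c v₃)} :=
        myCardCongr' _ _ fun c => by tauto
      rw [p1, p2, p3]
    · rintro c ⟨hc, -, h25c, -⟩ hq2 hq1
      obtain ⟨m12, m23, m34, m45, m51⟩ := nc c hc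
      exact (pat_disj (c v₁) (c v₂) (c v₃) (c v₄) (c v₅) m12 m23 m34 m45 m51).1
        ⟨h25c, hq2⟩ hq1
  -- ===== Term 2 =====
  have R2 : numCol (delContract G v v₂ v₄) 4 =
      Nat.card {c : V → Fin 4 // prDel G v c ∧ c v = 0 ∧ c v₂ = c v₄ ∧ True} := by
    unfold numCol
    refine Eq.trans ?_ (card_dc G v v₂ v₄ hv2.ne' hv4.ne' h24 n24
      (fun _ => True) (fun _ => True) (fun _ => Iff.rfl))
    exact myCardCongr' _ _ fun d => (and_iff_left trivial).symm
  have R2' : numCol (addEdge (addEdge (delContract G v v₂ v₄) ⟨v₃, hv3.ne', h34⟩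
        ⟨v₁, hv1.ne', h14⟩) ⟨v₃, hv3.ne', h34⟩ ⟨v₅, hv5.ne', h45.symm⟩) 4 =
      Nat.card {c : V → Fin 4 // prDel G v c ∧ c v = 0 ∧ c v₂ = c v₄ ∧
        (c v₃ ≠ c v₁ ∧ c v₃ ≠ c v₅)} := by
    unfold numCol
    refine Eq.trans ?_ (card_dc G v v₂ v₄ hv2.ne' hv4.ne' h24 n24
      (fun c => c v₃ ≠ c v₁ ∧ c v₃ ≠ c v₅)
      (fun d => d ⟨v₃, hv3.ne', h34⟩ ≠ d ⟨v₁, hv1.ne', h14⟩ ∧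
        d ⟨v₃, hv3.ne', h34⟩ ≠ d ⟨v₅, hv5.ne', h45.symm⟩)
      (fun c => Iff.rfl))
    apply myCardCongr'
    intro d
    rw [addEdge_proper _ _ _ hne35 d, addEdge_proper _ _ _ hne31 d, and_assoc]
  have E2 : numCol (delContract G v v₂ v₄) 4 =
      Nat.card {c : V → Fin 4 // (prDel G v c ∧ (c v₂ = c v₄ ∧ c v₁ = c v₃)) ∧ c v = 0} +
      Nat.card {c : V → Fin 4 // (prDel G v c ∧ (c v₂ = c v₄ ∧ c v₃ = c v₅)) ∧ c v = 0} +
      Nat.card {c : V → Fin 4 // prDel G v c ∧ c v = 0 ∧ c v₂ = c v₄ ∧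
        (c v₃ ≠ c v₁ ∧ c v₃ ≠ c v₅)} := by
    rw [R2]
    rw [myCardSplit2 (fun c : V → Fin 4 => prDel G v c ∧ c v = 0 ∧ c v₂ = c v₄ ∧ True)
      (fun c => c v₁ = c v₃) (fun c => c v₃ = c v₅)
      (fun c => c v₃ ≠ c v₁ ∧ c v₃ ≠ c v₅)
      ?_ ?_]
    · have p1 : Nat.card {c : V → Fin 4 //
          (prDel G v c ∧ c v = 0 ∧ c v₂ = c v₄ ∧ True) ∧ c v₁ = c v₃} =
          Nat.card {c : V → Fin 4 // (prDel G v c ∧ (c v₂ = c v₄ ∧ c v₁ = c v₃)) ∧ c v = 0} :=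
        myCardCongr' _ _ fun c => by tauto
      have p2 : Nat.card {c : V → Fin 4 //
          (prDel G v c ∧ c v = 0 ∧ c v₂ = c v₄ ∧ True) ∧ c v₃ = c v₅} =
          Nat.card {c : V → Fin 4 // (prDel G v c ∧ (c v₂ = c v₄ ∧ c v₃ = c v₅)) ∧ c v = 0} :=
        myCardCongr' _ _ fun c => by tauto
      have p3 : Nat.card {c : V → Fin 4 //
          (prDel G v c ∧ c v = 0 ∧ c v₂ = c v₄ ∧ True) ∧ (c v₃ ≠ c v₁ ∧ c v₃ ≠ c v₅)} =
          Nat.card {c : V → Fin 4 // prDel G v c ∧ c v = 0 ∧ c v₂ = c v₄ ∧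
            (c v₃ ≠ c v₁ ∧ c v₃ ≠ c v₅)} :=
        myCardCongr' _ _ fun c => by tauto
      rw [p1, p2, p3]
    · rintro c ⟨hc, -, h24c, -⟩ hq2 hq1
      obtain ⟨m12, m23, m34, m45, m51⟩ := nc c hc
      exact ((pat_disj (c v₁) (c v₂) (c v₃) (c v₄) (c v₅) m12 m23 m34 m45 m51).2.2.2.2.2)
        ⟨h24c, hq1⟩ hq2
    · intro c _
      exact ⟨fun h => ⟨fun e => h.1 e.symm, h.2⟩, fun h => ⟨fun e => h.1 e.symm, h.2⟩⟩
  -- ===== Term 3 =====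
  have R3 : numCol (delContract G v v₃ v₅) 4 =
      Nat.card {c : V → Fin 4 // prDel G v c ∧ c v = 0 ∧ c v₃ = c v₅ ∧ True} := by
    unfold numCol
    refine Eq.trans ?_ (card_dc G v v₃ v₅ hv3.ne' hv5.ne' h35 n35
      (fun _ => True) (fun _ => True) (fun _ => Iff.rfl))
    exact myCardCongr' _ _ fun d => (and_iff_left trivial).symm
  have R3' : numCol (addEdge (delContract G v v₃ v₅) ⟨v₁, hv1.ne', h15⟩
        ⟨v₄, hv4.ne', h45⟩) 4 =
      Nat.card {c : V → Fin 4 // prDel G v c ∧ c v = 0 ∧ c v₃ = c v₅ ∧ c v₁ ≠ c v₄} := by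
    unfold numCol
    refine Eq.trans ?_ (card_dc G v v₃ v₅ hv3.ne' hv5.ne' h35 n35
      (fun c => c v₁ ≠ c v₄)
      (fun d => d ⟨v₁, hv1.ne', h15⟩ ≠ d ⟨v₄, hv4.ne', h45⟩)
      (fun c => Iff.rfl))
    apply myCardCongr'
    intro d
    exact addEdge_proper _ _ _ hne14 d
  have E3 : numCol (delContract G v v₃ v₅) 4 =
      Nat.card {c : V → Fin 4 // (prDel G v c ∧ (c v₃ = c v₅ ∧ c v₁ = c v₄)) ∧ c v = 0} +
      Nat.card {c : V → Fin 4 // prDel G v c ∧ c v = 0 ∧ c v₃ = c v₅ ∧ c v₁ ≠ c v₄} := by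
    rw [R3]
    rw [myCardSplit1 (fun c : V → Fin 4 => prDel G v c ∧ c v = 0 ∧ c v₃ = c v₅ ∧ True)
      (fun c => c v₁ = c v₄) (fun c => c v₁ ≠ c v₄) (fun c _ => Iff.rfl)]
    have p1 : Nat.card {c : V → Fin 4 //
        (prDel G v c ∧ c v = 0 ∧ c v₃ = c v₅ ∧ True) ∧ c v₁ = c v₄} =
        Nat.card {c : V → Fin 4 // (prDel G v c ∧ (c v₃ = c v₅ ∧ c v₁ = c v₄)) ∧ c v = 0} :=
      myCardCongr' _ _ fun c => by tauto
    have p2 : Nat.card {c : V → Fin 4 //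
        (prDel G v c ∧ c v = 0 ∧ c v₃ = c v₅ ∧ True) ∧ c v₁ ≠ c v₄} =
        Nat.card {c : V → Fin 4 // prDel G v c ∧ c v = 0 ∧ c v₃ = c v₅ ∧ c v₁ ≠ c v₄} :=
      myCardCongr' _ _ fun c => by tauto
    rw [p1, p2]
  -- ===== Final arithmetic =====
  rw [E0, E1, R1', E2, R2', E3, R3']
  push_cast
  ring
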